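/- Let N ≥ 2 and work in (ℂ²)^{⊗N}. For α ∈ ℂ define Ψ(α) = ψ_1^{(3)}(α) ⊗ ψ_2(α) ⊗ ⋯ ⊗ ψ_N(α), where ψ_1^{(3)}(α) = (1, ∑_{k=2}^N α^{2^{N−k}}) ∈ ℂ² and ψ_k(α) = (1, α^{2^{N−k}}) ∈ ℂ² for k = 2,…,N. For x ∈ {0,…,2^{N−1}−1} let e_{(x)} denote the basis vector of (ℂ²)^{⊗(N−1)} given by the (N−1)-digit binary expansion of x, and for j = 0,…,2^{N−2}−1 define w_j = e_0 ⊗ ( ∑_{k=2}^N e_{(2^{N−k}+j)} ) − e_1 ⊗ e_{(j)} ∈ (ℂ²)^{⊗N}. Then: (a) ⟨w_j, Ψ(α)⟩ = 0 for every j and every α ∈ ℂ; (b) the vectors w_0, …, w_{2^{N−2}−1} are linearly independent; (c) consequently, they span the orthogonal complement of span{Ψ(α) : α ∈ ℂ}, which has dimension 2^{N−2}. -/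

import Mathlib

open scoped InnerProductSpace

noncomputable section

/-- The `N`-qubit Hilbert space `(ℂ²)^{⊗N}` (here `N = n + 2 ≥ 2`), realized as the
Euclidean space whose coordinates are indexed by tuples of local indices. -/
abbrev QubitSpace (n : ℕ) := EuclideanSpace ℂ (Fin (n + 2) → Fin 2)

/-- The product vector `Ψ(α) = ψ₁⁽³⁾(α) ⊗ ψ₂(α) ⊗ ⋯ ⊗ ψ_N(α)` for `N = n + 2` qubits,
where `ψ₁⁽³⁾(α) = (1, ∑_{k=2}^N α^{2^{N-k}})` and `ψ_k(α) = (1, α^{2^{N-k}})` for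
`k = 2,…,N` (party `k` has index `i = k - 1`). -/
def Psi16 (n : ℕ) (α : ℂ) : QubitSpace n :=
  WithLp.toLp 2 (fun f => ∏ i : Fin (n + 2),
    if (i : ℕ) = 0 then
      (if f i = 0 then 1 else ∑ t ∈ Finset.range (n + 1), α ^ (2 ^ t))
    else α ^ ((f i : ℕ) * 2 ^ (n + 1 - (i : ℕ))))

/-- The number `x ∈ {0,…,2^{N-1}-1}` whose `(N-1)`-digit binary expansion is given by the
last `N - 1` local indices of `f` (party `k = 2,…,N` carries the binary digit of weight
`2^{N-k}`), so that the standard basis vector of `(ℂ²)^{⊗(N-1)}` with index tuple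
`(f 1, …, f (N-1))` is `e_{(x)}`. -/
def enc16 (n : ℕ) (f : Fin (n + 2) → Fin 2) : ℕ :=
  ∑ i : Fin (n + 2), if (i : ℕ) = 0 then 0 else (f i : ℕ) * 2 ^ (n + 1 - (i : ℕ))

/-- The vector `w_j = e₀ ⊗ (∑_{k=2}^N e_{(2^{N-k}+j)}) − e₁ ⊗ e_{(j)} ∈ (ℂ²)^{⊗N}`. -/
def w16 (n : ℕ) (j : ℕ) : QubitSpace n :=
  WithLp.toLp 2 (fun f =>
    (if f 0 = 0 then
        ∑ k ∈ Finset.Icc 2 (n + 2),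
          (if enc16 n f = 2 ^ (n + 2 - k) + j then (1 : ℂ) else 0)
      else 0)
    - (if f 0 = 1 ∧ enc16 n f = j then 1 else 0))

open Finset


lemma Lmod (x : ℕ) : ∀ k, ∑ e ∈ range k, (x / 2^e % 2) * 2^e = x % 2^k := by
  intro k
  induction k with
  | zero => simp [Nat.mod_one]
  | succ k ih =>
    rw [sum_range_succ, ih, pow_succ, Nat.mod_mul]
    ring


lemma L1 (d : ℕ → ℕ) (hd : ∀ e, d e < 2) : ∀ k, ∑ e ∈ range k, d e * 2^e < 2^k := by
  intro k
  induction k with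
  | zero => simp
  | succ k ih =>
    rw [sum_range_succ, pow_succ]
    have := hd k
    have h2 : d k * 2^k ≤ 1 * 2^k := Nat.mul_le_mul_right _ (by omega)
    omega


lemma L2 (d : ℕ → ℕ) (hd : ∀ e, d e < 2) (k j : ℕ) (hj : j < k) :
    (∑ e ∈ range k, d e * 2 ^ e) / 2 ^ j % 2 = d j := by
  have hsplit : ∑ e ∈ range k, d e * 2^e
      = (∑ e ∈ range j, d e * 2^e) + 2^j * (d j + 2 * ∑ e ∈ range (k - (j+1)), d (j+1+e) * 2^e) := by
    rw [← Finset.sum_range_add_sum_Ico _ (Nat.succ_le_of_lt hj), sum_range_succ,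
      Finset.sum_Ico_eq_sum_range]
    have : ∀ e ∈ range (k - (j+1)), d (j+1+e) * 2^(j+1+e) = 2^j * (2 * (d (j+1+e) * 2^e)) := by
      intro e _
      rw [pow_add, pow_succ]
      ring
    rw [Finset.sum_congr rfl this]
    rw [← Finset.mul_sum, ← Finset.mul_sum]
    ring
  rw [hsplit, Nat.add_mul_div_left _ _ (show 0 < 2 ^ j by positivity),
    Nat.div_eq_of_lt (L1 d hd j), Nat.zero_add, Nat.add_mul_mod_self_left,
    Nat.mod_eq_of_lt (hd j)]


def dec16 (n : ℕ) (b : Fin 2) (x : ℕ) : Fin (n + 2) → Fin 2 :=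
  fun i => if (i : ℕ) = 0 then b else ⟨x / 2 ^ (n + 1 - (i : ℕ)) % 2, Nat.mod_lt _ (by norm_num)⟩


def dfun (n : ℕ) (f : Fin (n + 2) → Fin 2) : ℕ → ℕ :=
  fun e => if h : e < n + 1 then (f ⟨n + 1 - e, by omega⟩ : ℕ) else 0


lemma dfun_lt (n : ℕ) (f : Fin (n + 2) → Fin 2) (e : ℕ) : dfun n f e < 2 := by
  unfold dfun
  split
  · exact (f _).isLt
  · norm_num


lemma encg (n : ℕ) (f : Fin (n + 2) → Fin 2) :
    enc16 n f = ∑ e ∈ range (n + 1), dfun n f e * 2 ^ e := by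
  unfold enc16
  have hG : ∀ i : Fin (n + 2),
      (if (i : ℕ) = 0 then 0 else (f i : ℕ) * 2 ^ (n + 1 - (i : ℕ)))
      = (fun m : ℕ => if h : m < n + 2 then
          (if m = 0 then 0 else (f ⟨m, h⟩ : ℕ) * 2 ^ (n + 1 - m)) else 0) (i : ℕ) := by
    intro i
    simp [i.isLt]
  rw [Finset.sum_congr rfl (fun i _ => hG i),
    Fin.sum_univ_eq_sum_range (fun m : ℕ => if h : m < n + 2 then
          (if m = 0 then 0 else (f ⟨m, h⟩ : ℕ) * 2 ^ (n + 1 - m)) else 0) (n + 2),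
    Finset.sum_range_succ', ← Finset.sum_range_reflect]
  have hz : (if h : 0 < n + 2 then if (0:ℕ) = 0 then (0:ℕ) else (f ⟨0, h⟩ : ℕ) * 2 ^ (n + 1 - 0) else 0) = 0 := by
    simp
  rw [hz, add_zero]
  apply Finset.sum_congr rfl
  intro e he
  rw [Finset.mem_range] at he
  have h1 : n + 1 - 1 - e + 1 = n + 1 - e := by omega
  rw [h1]
  have h2 : n + 1 - e < n + 2 := by omega
  have h3 : n + 1 - e ≠ 0 := by omega
  rw [dif_pos h2, if_neg h3]
  unfold dfun
  rw [dif_pos he]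
  have h4 : n + 1 - (n + 1 - e) = e := by omega
  rw [h4]


lemma enc_lt (n : ℕ) (f : Fin (n + 2) → Fin 2) : enc16 n f < 2 ^ (n + 1) := by
  rw [encg]
  exact L1 (dfun n f) (dfun_lt n f) (n + 1)


lemma dec_zero (n : ℕ) (b : Fin 2) (x : ℕ) : dec16 n b x 0 = b := by
  unfold dec16
  simp


lemma enc_dec (n : ℕ) (b : Fin 2) (x : ℕ) (hx : x < 2 ^ (n + 1)) :
    enc16 n (dec16 n b x) = x := by
  rw [encg]
  have hd : ∀ e ∈ range (n + 1), dfun n (dec16 n b x) e * 2 ^ e = (x / 2 ^ e % 2) * 2 ^ e := by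
    intro e he
    rw [Finset.mem_range] at he
    unfold dfun dec16
    rw [dif_pos he, if_neg (show ¬ ((⟨n + 1 - e, by omega⟩ : Fin (n + 2)) : ℕ) = 0 by
      simp only [Fin.val_mk]; omega)]
    have h4 : n + 1 - (n + 1 - e) = e := by omega
    simp only [h4]
  rw [Finset.sum_congr rfl hd, Lmod, Nat.mod_eq_of_lt hx]


lemma dec_enc (n : ℕ) (f : Fin (n + 2) → Fin 2) : dec16 n (f 0) (enc16 n f) = f := by
  funext i
  unfold dec16
  by_cases hi : (i : ℕ) = 0
  · rw [if_pos hi]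
    have h0 : (0 : Fin (n + 2)) = i := by
      apply Fin.ext
      simp [hi.symm]
      omega
    rw [h0]
  · rw [if_neg hi]
    have hj : n + 1 - (i : ℕ) < n + 1 := by
      have := i.isLt
      omega
    apply Fin.ext
    show (enc16 n f) / 2 ^ (n + 1 - (i : ℕ)) % 2 = (f i : ℕ)
    rw [encg, L2 (dfun n f) (dfun_lt n f) (n + 1) _ hj]
    unfold dfun
    rw [dif_pos hj]
    have h4 : (⟨n + 1 - (n + 1 - (i : ℕ)), by omega⟩ : Fin (n + 2)) = i := by
      apply Fin.ext
      simp only [Fin.val_mk]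
      have := i.isLt
      omega
    rw [h4]


def E16 (n : ℕ) : (Fin (n + 2) → Fin 2) ≃ (Fin 2 × Fin (2 ^ (n + 1))) where
  toFun f := (f 0, ⟨enc16 n f, enc_lt n f⟩)
  invFun p := dec16 n p.1 p.2
  left_inv f := by
    simp only
    rw [dec_enc]
  right_inv p := by
    apply Prod.ext
    · simp [dec_zero]
    · apply Fin.ext
      simp only [Fin.val_mk]
      exact enc_dec n p.1 p.2 p.2.isLt


lemma sum_dec (n : ℕ) (g : (Fin (n + 2) → Fin 2) → ℂ) :
    ∑ f, g f = (∑ x ∈ Finset.range (2 ^ (n + 1)), g (dec16 n 0 x))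
      + ∑ x ∈ Finset.range (2 ^ (n + 1)), g (dec16 n 1 x) := by
  rw [← Equiv.sum_comp (E16 n).symm g, Fintype.sum_prod_type, Fin.sum_univ_two]
  congr 1
  · rw [← Fin.sum_univ_eq_sum_range (fun x => g (dec16 n 0 x)) (2 ^ (n + 1))]
    rfl
  · rw [← Fin.sum_univ_eq_sum_range (fun x => g (dec16 n 1 x)) (2 ^ (n + 1))]
    rfl

/-- evaluation at a coordinate, as a linear map -/


def evalLM (n : ℕ) (f : Fin (n + 2) → Fin 2) : QubitSpace n →ₗ[ℂ] ℂ where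
  toFun v := v f
  map_add' := fun _ _ => rfl
  map_smul' := fun _ _ => rfl


lemma Psi_apply (n : ℕ) (α : ℂ) (f : Fin (n + 2) → Fin 2) :
    Psi16 n α f = (if f 0 = 0 then 1 else ∑ t ∈ Finset.range (n + 1), α ^ (2 ^ t))
      * α ^ enc16 n f := by
  unfold Psi16 enc16
  simp only [WithLp.ofLp_toLp]
  rw [Fin.prod_univ_succ, Fin.sum_univ_succ]
  simp only [Fin.val_zero, if_pos rfl, Fin.val_succ, Nat.succ_ne_zero, if_false,
    Nat.add_eq_zero, and_false, false_and, eq_self_iff_true, if_true, zero_add]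
  congr 1
  rw [Finset.prod_pow_eq_pow_sum]


lemma Icc_reindex (n : ℕ) (h : ℕ → ℂ) :
    ∑ k ∈ Finset.Icc 2 (n + 2), h (n + 2 - k) = ∑ t ∈ Finset.range (n + 1), h t := by
  rw [← Finset.Ico_add_one_right_eq_Icc, Finset.sum_Ico_eq_sum_range]
  have h5 : n + 2 + 1 - 2 = n + 1 := by omega
  rw [h5]
  have h6 : ∀ i ∈ Finset.range (n + 1), h (n + 2 - (2 + i)) = h (n + 1 - 1 - i) := by
    intro i _
    congr 1
    omega
  rw [Finset.sum_congr rfl h6, Finset.sum_range_reflect]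


lemma w_dec0 (n j x : ℕ) (hx : x < 2 ^ (n + 1)) :
    w16 n j (dec16 n 0 x)
      = ∑ k ∈ Finset.Icc 2 (n + 2), (if x = 2 ^ (n + 2 - k) + j then (1 : ℂ) else 0) := by
  unfold w16
  simp only [WithLp.ofLp_toLp]
  rw [enc_dec n 0 x hx, dec_zero]
  simp


lemma w_dec1 (n j x : ℕ) (hx : x < 2 ^ (n + 1)) :
    w16 n j (dec16 n 1 x) = -(if x = j then (1 : ℂ) else 0) := by
  unfold w16
  simp only [WithLp.ofLp_toLp]
  rw [enc_dec n 1 x hx, dec_zero]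
  simp


lemma Psi_dec0 (n : ℕ) (α : ℂ) (x : ℕ) (hx : x < 2 ^ (n + 1)) :
    Psi16 n α (dec16 n 0 x) = α ^ x := by
  rw [Psi_apply, enc_dec n 0 x hx, dec_zero]
  simp


lemma Psi_dec1 (n : ℕ) (α : ℂ) (x : ℕ) (hx : x < 2 ^ (n + 1)) :
    Psi16 n α (dec16 n 1 x) = (∑ t ∈ Finset.range (n + 1), α ^ (2 ^ t)) * α ^ x := by
  rw [Psi_apply, enc_dec n 1 x hx, dec_zero]
  norm_num


lemma parta (n j : ℕ) (hj : j < 2 ^ n) (α : ℂ) : ⟪w16 n j, Psi16 n α⟫_ℂ = 0 := by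
  have hpow : ∀ k ∈ Finset.Icc 2 (n + 2), 2 ^ (n + 2 - k) + j < 2 ^ (n + 1) := by
    intro k hk
    rw [Finset.mem_Icc] at hk
    have h1 : 2 ^ (n + 2 - k) ≤ 2 ^ n := Nat.pow_le_pow_right (by norm_num) (by omega)
    have h2 : 2 ^ n + 2 ^ n = 2 ^ (n + 1) := by rw [pow_succ]; ring
    omega
  have hj' : j ∈ Finset.range (2 ^ (n + 1)) := by
    rw [Finset.mem_range]
    have h2 : 2 ^ n ≤ 2 ^ (n + 1) := Nat.pow_le_pow_right (by norm_num) (by omega)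
    omega
  rw [PiLp.inner_apply]
  simp only [RCLike.inner_apply]
  have hconj : ∀ f : Fin (n + 2) → Fin 2,
      (starRingEnd ℂ) (w16 n j f) * Psi16 n α f = w16 n j f * Psi16 n α f := by
    intro f
    congr 1
    unfold w16
    simp only [WithLp.ofLp_toLp]
    rw [map_sub]
    simp [apply_ite (starRingEnd ℂ), map_sum]
  rw [Finset.sum_congr rfl (fun f _ => mul_comm (Psi16 n α f) ((starRingEnd ℂ) (w16 n j f)))]
  rw [Finset.sum_congr rfl (fun f _ => hconj f), sum_dec]
  have h0 : ∑ x ∈ Finset.range (2 ^ (n + 1)), w16 n j (dec16 n 0 x) * Psi16 n α (dec16 n 0 x)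
      = ∑ t ∈ Finset.range (n + 1), α ^ (2 ^ t + j) := by
    have e1 : ∀ x ∈ Finset.range (2 ^ (n + 1)),
        w16 n j (dec16 n 0 x) * Psi16 n α (dec16 n 0 x)
        = ∑ k ∈ Finset.Icc 2 (n + 2), (if x = 2 ^ (n + 2 - k) + j then α ^ x else 0) := by
      intro x hx
      rw [Finset.mem_range] at hx
      rw [w_dec0 n j x hx, Psi_dec0 n α x hx, Finset.sum_mul]
      apply Finset.sum_congr rfl
      intro k _
      rw [ite_mul, one_mul, zero_mul]
    rw [Finset.sum_congr rfl e1, Finset.sum_comm]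
    have e2 : ∀ k ∈ Finset.Icc 2 (n + 2),
        (∑ x ∈ Finset.range (2 ^ (n + 1)), if x = 2 ^ (n + 2 - k) + j then α ^ x else 0)
        = α ^ (2 ^ (n + 2 - k) + j) := by
      intro k hk
      rw [Finset.sum_ite_eq' (Finset.range (2 ^ (n + 1))) (2 ^ (n + 2 - k) + j) (fun x => α ^ x),
        if_pos (Finset.mem_range.mpr (hpow k hk))]
    rw [Finset.sum_congr rfl e2]
    exact Icc_reindex n (fun t => α ^ (2 ^ t + j))
  have h1 : ∑ x ∈ Finset.range (2 ^ (n + 1)), w16 n j (dec16 n 1 x) * Psi16 n α (dec16 n 1 x)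
      = -∑ t ∈ Finset.range (n + 1), α ^ (2 ^ t + j) := by
    have e1 : ∀ x ∈ Finset.range (2 ^ (n + 1)),
        w16 n j (dec16 n 1 x) * Psi16 n α (dec16 n 1 x)
        = (if x = j then -((∑ t ∈ Finset.range (n + 1), α ^ 2 ^ t) * α ^ x) else 0) := by
      intro x hx
      rw [Finset.mem_range] at hx
      rw [w_dec1 n j x hx, Psi_dec1 n α x hx]
      split_ifs <;> ring
    rw [Finset.sum_congr rfl e1,
      Finset.sum_ite_eq' (Finset.range (2 ^ (n + 1))) j
        (fun x => -((∑ t ∈ Finset.range (n + 1), α ^ 2 ^ t) * α ^ x)), if_pos hj',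
      Finset.sum_mul]
    congr 1
    exact Finset.sum_congr rfl (fun t _ => (pow_add α (2 ^ t) j).symm)
  rw [h0, h1]
  ring


lemma SL (u : ℕ → ℂ) (N b m : ℕ) :
    ∑ x ∈ Finset.range N, (if m = x + b then u x else 0)
      = if b ≤ m ∧ m - b < N then u (m - b) else 0 := by
  rcases le_or_gt b m with hb | hb
  · have hiff : ∀ x : ℕ, (m = x + b) = (x = m - b) := by
      intro x
      exact propext (by omega)
    simp only [hiff]
    rw [Finset.sum_ite_eq' (Finset.range N) (m - b) u]
    simp only [Finset.mem_range]
    exact if_congr (by omega) rfl rfl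
  · have hz : ∀ x ∈ Finset.range N, (if m = x + b then u x else 0) = 0 := by
      intro x _
      rw [if_neg (by omega)]
    rw [Finset.sum_congr rfl hz, Finset.sum_const_zero, if_neg (by omega)]


lemma key (n : ℕ) (v : QubitSpace n) (hv : ∀ α : ℂ, ⟪v, Psi16 n α⟫_ℂ = 0) :
    (∀ r : ℕ, ∑ t ∈ Finset.range (n + 1),
        (if r < 2 ^ t then (starRingEnd ℂ) (v (dec16 n 1 (2 ^ (n + 1) + r - 2 ^ t))) else 0) = 0)
    ∧ (∀ m < 2 ^ (n + 1), (starRingEnd ℂ) (v (dec16 n 0 m))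
        + ∑ t ∈ Finset.range (n + 1),
          (if 2 ^ t ≤ m then (starRingEnd ℂ) (v (dec16 n 1 (m - 2 ^ t))) else 0) = 0) := by
  set N := 2 ^ (n + 1) with hN
  set a : ℕ → ℂ := fun x => (starRingEnd ℂ) (v (dec16 n 0 x)) with ha
  set u : ℕ → ℂ := fun x => (starRingEnd ℂ) (v (dec16 n 1 x)) with hu
  set q : Polynomial ℂ :=
    (∑ x ∈ Finset.range N, Polynomial.C (a x) * Polynomial.X ^ x)
    + ∑ x ∈ Finset.range N, ∑ t ∈ Finset.range (n + 1),
        Polynomial.C (u x) * Polynomial.X ^ (x + 2 ^ t) with hq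
  have heval : ∀ α : ℂ, q.eval α = ⟪v, Psi16 n α⟫_ℂ := by
    intro α
    rw [PiLp.inner_apply]
    simp only [RCLike.inner_apply]
    rw [Finset.sum_congr rfl (fun f _ => mul_comm (Psi16 n α f) ((starRingEnd ℂ) (v f)))]
    rw [sum_dec n (fun f => (starRingEnd ℂ) (v f) * Psi16 n α f)]
    simp only [hq, Polynomial.eval_add, Polynomial.eval_finset_sum, Polynomial.eval_mul,
      Polynomial.eval_C, Polynomial.eval_pow, Polynomial.eval_X]
    congr 1
    · apply Finset.sum_congr rfl
      intro x hx
      rw [Psi_dec0 n α x (Finset.mem_range.mp hx)]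
    · apply Finset.sum_congr rfl
      intro x hx
      rw [Psi_dec1 n α x (Finset.mem_range.mp hx), Finset.sum_mul, Finset.mul_sum]
      apply Finset.sum_congr rfl
      intro t _
      rw [pow_add]
      ring
  have hq0 : q = 0 := by
    apply Polynomial.funext
    intro α
    rw [heval, hv, Polynomial.eval_zero]
  have hcoeff : ∀ m : ℕ, (if m < N then a m else 0)
      + ∑ t ∈ Finset.range (n + 1),
        (if 2 ^ t ≤ m ∧ m - 2 ^ t < N then u (m - 2 ^ t) else 0) = 0 := by
    intro m
    have h := congrArg (fun p : Polynomial ℂ => p.coeff m) hq0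
    simp only [hq, Polynomial.coeff_add, Polynomial.finset_sum_coeff, Polynomial.coeff_C_mul,
      Polynomial.coeff_X_pow, Polynomial.coeff_zero, mul_ite, mul_one, mul_zero] at h
    rw [Finset.sum_ite_eq (Finset.range N) m a, Finset.sum_comm] at h
    have h2 : ∀ t ∈ Finset.range (n + 1),
        (∑ x ∈ Finset.range N, if m = x + 2 ^ t then u x else 0)
        = (if 2 ^ t ≤ m ∧ m - 2 ^ t < N then u (m - 2 ^ t) else 0) :=
      fun t _ => SL u N (2 ^ t) m
    rw [Finset.sum_congr rfl h2] at h
    simp only [Finset.mem_range] at h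
    exact h
  constructor
  · intro r
    have h := hcoeff (N + r)
    rw [if_neg (by omega), zero_add] at h
    have h3 : ∀ t ∈ Finset.range (n + 1),
        (if 2 ^ t ≤ N + r ∧ N + r - 2 ^ t < N then u (N + r - 2 ^ t) else 0)
        = (if r < 2 ^ t then u (N + r - 2 ^ t) else 0) := by
      intro t ht
      rw [Finset.mem_range] at ht
      have hle : 2 ^ t ≤ N := Nat.pow_le_pow_right (by norm_num) (by omega)
      have hpos : 0 < 2 ^ t := by positivity
      exact if_congr (by omega) rfl rfl
    rw [Finset.sum_congr rfl h3] at h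
    exact h
  · intro m hm
    have h := hcoeff m
    rw [if_pos hm] at h
    have h3 : ∀ t ∈ Finset.range (n + 1),
        (if 2 ^ t ≤ m ∧ m - 2 ^ t < N then u (m - 2 ^ t) else 0)
        = (if 2 ^ t ≤ m then u (m - 2 ^ t) else 0) := by
      intro t ht
      have hlt : m - 2 ^ t < N := lt_of_le_of_lt (Nat.sub_le m _) hm
      exact if_congr (Iff.intro (fun hh => hh.1) (fun hh => ⟨hh, hlt⟩)) rfl rfl
    rw [Finset.sum_congr rfl h3] at h
    exact h


lemma vanish (n : ℕ) (v : QubitSpace n) (hv : ∀ α : ℂ, ⟪v, Psi16 n α⟫_ℂ = 0)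
    (h0 : ∀ x < 2 ^ n, v (dec16 n 1 x) = 0) : v = 0 := by
  obtain ⟨hA, hB⟩ := key n v hv
  have hNn : 2 ^ (n + 1) = 2 ^ n + 2 ^ n := by rw [pow_succ]; ring
  have main : ∀ k : ℕ, ∀ r, r < 2 ^ n → 2 ^ n - 1 - r = k → v (dec16 n 1 (2 ^ n + r)) = 0 := by
    intro k
    induction k using Nat.strong_induction_on with
    | _ k IH =>
      intro r hr hk
      have hAr := hA r
      rw [Finset.sum_range_succ] at hAr
      have hterm : ∀ t ∈ Finset.range n,
          (if r < 2 ^ t then (starRingEnd ℂ) (v (dec16 n 1 (2 ^ (n + 1) + r - 2 ^ t))) else 0)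
            = 0 := by
        intro t ht
        rw [Finset.mem_range] at ht
        by_cases h : r < 2 ^ t
        · rw [if_pos h]
          have h1 : 2 ^ t < 2 ^ n := Nat.pow_lt_pow_right (by norm_num) ht
          have hidx : 2 ^ (n + 1) + r - 2 ^ t = 2 ^ n + (2 ^ n + r - 2 ^ t) := by omega
          rw [hidx, IH (2 ^ n - 1 - (2 ^ n + r - 2 ^ t)) (by omega) (2 ^ n + r - 2 ^ t)
            (by omega) rfl, map_zero]
        · rw [if_neg h]
      rw [Finset.sum_congr rfl hterm, Finset.sum_const_zero, zero_add, if_pos hr] at hAr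
      have hidx : 2 ^ (n + 1) + r - 2 ^ n = 2 ^ n + r := by omega
      rw [hidx] at hAr
      simpa using hAr
  have hu1 : ∀ x < 2 ^ (n + 1), v (dec16 n 1 x) = 0 := by
    intro x hx
    by_cases h : x < 2 ^ n
    · exact h0 x h
    · have hx2 : x = 2 ^ n + (x - 2 ^ n) := by omega
      rw [hx2]
      exact main (2 ^ n - 1 - (x - 2 ^ n)) (x - 2 ^ n) (by omega) rfl
  have ha1 : ∀ m < 2 ^ (n + 1), v (dec16 n 0 m) = 0 := by
    intro m hm
    have h := hB m hm
    have hz : ∀ t ∈ Finset.range (n + 1),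
        (if 2 ^ t ≤ m then (starRingEnd ℂ) (v (dec16 n 1 (m - 2 ^ t))) else 0) = 0 := by
      intro t _
      by_cases hcase : 2 ^ t ≤ m
      · rw [if_pos hcase, hu1 (m - 2 ^ t) (lt_of_le_of_lt (Nat.sub_le m _) hm), map_zero]
      · rw [if_neg hcase]
    rw [Finset.sum_congr rfl hz, Finset.sum_const_zero, add_zero] at h
    simpa using h
  have hall : ∀ f, v f = 0 := by
    intro f
    have hf : dec16 n (f 0) (enc16 n f) = f := dec_enc n f
    rcases (by decide : ∀ b : Fin 2, b = 0 ∨ b = 1) (f 0) with hb | hb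
    · rw [← hf, hb]
      exact ha1 _ (enc_lt n f)
    · rw [← hf, hb]
      exact hu1 _ (enc_lt n f)
  exact PiLp.ext (fun f => by simp [hall f])

/-- (a) Each `w_j` (`j = 0,…,2^{N-2}-1`) is orthogonal to every `Ψ(α)`;
(b) the `w_j` are linearly independent; (c) they span the orthogonal complement of
`span{Ψ(α) : α ∈ ℂ}`, which has dimension `2^{N-2}`. Here `N = n + 2`, so `2^{N-2} = 2^n`. -/
theorem stmt16 (n : ℕ) :
    (∀ j < 2 ^ n, ∀ α : ℂ, ⟪w16 n j, Psi16 n α⟫_ℂ = 0) ∧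
    LinearIndependent ℂ (fun j : Fin (2 ^ n) => w16 n (j : ℕ)) ∧
    Submodule.span ℂ (Set.range (fun j : Fin (2 ^ n) => w16 n (j : ℕ)))
      = (Submodule.span ℂ (Set.range (Psi16 n)))ᗮ ∧
    Module.finrank ℂ (Submodule.span ℂ (Set.range (Psi16 n)))ᗮ = 2 ^ n := by
  have h2nn : 2 ^ n ≤ 2 ^ (n + 1) := Nat.pow_le_pow_right (by norm_num) (by omega)
  -- part (b)
  have hlin : LinearIndependent ℂ (fun j : Fin (2 ^ n) => w16 n (j : ℕ)) := by
    rw [Fintype.linearIndependent_iff]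
    intro g hg i
    have h := congrArg (evalLM n (dec16 n 1 (i : ℕ))) hg
    rw [map_sum, map_zero] at h
    have hterm : ∀ j ∈ Finset.univ (α := Fin (2 ^ n)),
        evalLM n (dec16 n 1 (i : ℕ)) (g j • w16 n (j : ℕ))
          = (if j = i then -g j else 0) := by
      intro j _
      rw [map_smul]
      show g j * (w16 n (j : ℕ) (dec16 n 1 (i : ℕ))) = _
      rw [w_dec1 n (j : ℕ) (i : ℕ) (lt_of_lt_of_le i.isLt h2nn)]
      by_cases hji : j = i
      · rw [if_pos hji, if_pos (congrArg Fin.val hji).symm]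
        ring
      · rw [if_neg hji, if_neg (fun hh => hji (Fin.ext hh.symm))]
        ring
    rw [Finset.sum_congr rfl hterm,
      Finset.sum_ite_eq' Finset.univ i (fun j => -g j), if_pos (Finset.mem_univ _)] at h
    exact neg_eq_zero.mp h
  set S := Submodule.span ℂ (Set.range (Psi16 n)) with hS
  have hwmem : ∀ j : Fin (2 ^ n), w16 n (j : ℕ) ∈ Sᗮ := by
    intro j
    rw [Submodule.mem_orthogonal']
    intro uu huu
    induction huu using Submodule.span_induction with
    | mem x hx =>
      obtain ⟨α, rfl⟩ := hx
      exact parta n (j : ℕ) j.isLt α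
    | zero => exact inner_zero_right _
    | add x y _ _ hx hy => rw [inner_add_right, hx, hy, add_zero]
    | smul c x _ hx => rw [inner_smul_right, hx, mul_zero]
  have hWle : Submodule.span ℂ (Set.range (fun j : Fin (2 ^ n) => w16 n (j : ℕ))) ≤ Sᗮ := by
    rw [Submodule.span_le]
    rintro _ ⟨j, rfl⟩
    exact hwmem j
  have hle2 : Sᗮ ≤ Submodule.span ℂ (Set.range (fun j : Fin (2 ^ n) => w16 n (j : ℕ))) := by
    intro v hvmem
    set c : Fin (2 ^ n) → ℂ := fun j => v (dec16 n 1 (j : ℕ)) with hc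
    set v' : QubitSpace n := v + ∑ j : Fin (2 ^ n), c j • w16 n (j : ℕ) with hv'
    have hv'mem : v' ∈ Sᗮ := Submodule.add_mem _ hvmem
      (Submodule.sum_mem _ (fun j _ => Submodule.smul_mem _ _ (hwmem j)))
    have hv'inner : ∀ α : ℂ, ⟪v', Psi16 n α⟫_ℂ = 0 := by
      intro α
      exact (Submodule.mem_orthogonal' S v').mp hv'mem _ (Submodule.subset_span ⟨α, rfl⟩)
    have h0 : ∀ x, ∀ hx : x < 2 ^ n, v' (dec16 n 1 x) = 0 := by
      intro x hx
      have hsum : ∑ j : Fin (2 ^ n), c j * (w16 n (j : ℕ) (dec16 n 1 x)) = -c ⟨x, hx⟩ := by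
        have hterm : ∀ j ∈ Finset.univ (α := Fin (2 ^ n)),
            c j * (w16 n (j : ℕ) (dec16 n 1 x))
              = (if j = (⟨x, hx⟩ : Fin (2 ^ n)) then -c j else 0) := by
          intro j _
          rw [w_dec1 n (j : ℕ) x (lt_of_lt_of_le hx h2nn)]
          by_cases hj : j = (⟨x, hx⟩ : Fin (2 ^ n))
          · rw [if_pos hj, if_pos (congrArg Fin.val hj).symm]
            ring
          · rw [if_neg hj, if_neg (fun hh => hj (Fin.ext hh.symm))]
            ring
        rw [Finset.sum_congr rfl hterm,
          Finset.sum_ite_eq' Finset.univ (⟨x, hx⟩ : Fin (2 ^ n)) (fun j => -c j),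
          if_pos (Finset.mem_univ _)]
      have he : evalLM n (dec16 n 1 x) v'
          = v (dec16 n 1 x) + ∑ j : Fin (2 ^ n), c j * (w16 n (j : ℕ) (dec16 n 1 x)) := by
        rw [hv', map_add, map_sum]
        exact congrArg₂ (· + ·) rfl (Finset.sum_congr rfl fun j _ => rfl)
      have : evalLM n (dec16 n 1 x) v' = 0 := by
        rw [he, hsum]
        show v (dec16 n 1 x) + -c ⟨x, hx⟩ = 0
        simp [hc]
      exact this
    have hv'0 : v' = 0 := vanish n v' hv'inner h0
    have hveq : v = -∑ j : Fin (2 ^ n), c j • w16 n (j : ℕ) :=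
      eq_neg_of_add_eq_zero_left (hv'.symm.trans hv'0)
    rw [hveq]
    exact Submodule.neg_mem _ (Submodule.sum_mem _
      (fun j _ => Submodule.smul_mem _ _ (Submodule.subset_span ⟨j, rfl⟩)))
  have hspan : Submodule.span ℂ (Set.range (fun j : Fin (2 ^ n) => w16 n (j : ℕ))) = Sᗮ :=
    le_antisymm hWle hle2
  refine ⟨fun j hj α => parta n j hj α, hlin, hspan, ?_⟩
  rw [← hspan, finrank_span_eq_card hlin, Fintype.card_fin]
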